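/- For every K ≥ 3, every T ≥ 1, every σ > 0, every threshold τ ∈ ℝ, and every fixed-budget strategy π with budget T, there exists a K-armed bandit problem ν whose arm distributions are all Gaussian with variance σ² and whose mean sequence μ_1 ≤ μ_2 ≤ … ≤ μ_K is nondecreasing, such that the expected simple regret satisfies R̄_T^{ν,π} ≥ (1/8)·√( σ²·max(2, log K) / (8T) ). -/

import Mathlib

open MeasureTheory Real

namespace TBP

/-- A `K`-armed bandit problem: a probability distribution on `ℝ` for each arm. -/
structure Bandit (K : ℕ) where
  dist : Fin K → Measure ℝ
  prob : ∀ k, IsProbabilityMeasure (dist k)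

/-- The mean of arm `k`. -/
noncomputable def Bandit.mean {K : ℕ} (ν : Bandit K) (k : Fin K) : ℝ := ∫ x, x ∂ ν.dist k

/-- The unstructured class `B`: all arm distributions are supported in `[0,1]`. -/
def Bandit.inB {K : ℕ} (ν : Bandit K) : Prop := ∀ k, ν.dist k (Set.Icc (0:ℝ) 1) = 1

/-- All arms are `σ²`-sub-Gaussian. -/
def Bandit.subG {K : ℕ} (σ : ℝ) (ν : Bandit K) : Prop :=
  ∀ k, ∀ t : ℝ, ∫ x, Real.exp (t * (x - ν.mean k)) ∂ ν.dist k ≤ Real.exp (σ ^ 2 * t ^ 2 / 2)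

/-- All arms are Gaussian with variance `σ²`. -/
def Bandit.isGaussian {K : ℕ} (σ : ℝ) (ν : Bandit K) : Prop :=
  ∃ m : Fin K → ℝ, ∀ k, ν.dist k = ProbabilityTheory.gaussianReal (m k) ⟨σ ^ 2, sq_nonneg σ⟩

/-- The monotone (nondecreasing means) shape constraint. -/
def Bandit.mono {K : ℕ} (ν : Bandit K) : Prop := Monotone ν.mean

/-- The unimodal shape constraint. -/
def Bandit.unimodal {K : ℕ} (ν : Bandit K) : Prop :=
  ∃ kstar : Fin K, (∀ i j : Fin K, i ≤ j → j ≤ kstar → ν.mean i ≤ ν.mean j) ∧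
    (∀ i j : Fin K, kstar ≤ i → i ≤ j → ν.mean j ≤ ν.mean i)

/-- The concave shape constraint: `μ_{k-1} + μ_{k+1} ≤ 2 μ_k` at interior indices. -/
def Bandit.concave {K : ℕ} (ν : Bandit K) : Prop :=
  ∀ k : ℕ, ∀ (h0 : 0 < k) (h1 : k + 1 < K),
    ν.mean ⟨k - 1, by omega⟩ + ν.mean ⟨k + 1, h1⟩ ≤ 2 * ν.mean ⟨k, by omega⟩

/-- A fixed-budget strategy with budget `T` on `K` arms: a measurable sampling policy
(choosing the next arm from past observations) and a measurable final classification. -/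
structure Strategy (K T : ℕ) where
  policy : (t : ℕ) → (Fin t → ℝ) → Fin K
  policy_meas : ∀ t, Measurable (policy t)
  decision : (Fin T → ℝ) → Fin K → Bool
  decision_meas : Measurable decision

/-- Law of the first `t` observations produced by playing `policy` on the bandit `ν`. -/
noncomputable def traj {K : ℕ} (ν : Bandit K) (policy : (t : ℕ) → (Fin t → ℝ) → Fin K) :
    (t : ℕ) → Measure (Fin t → ℝ)
  | 0 => Measure.dirac (fun i => Fin.elim0 i)
  | (t + 1) => (traj ν policy t).bind
      (fun h => (ν.dist (policy t h)).map (fun y => Fin.snoc h y))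

/-- The true classification of arm `k` (`true` iff `μ_k ≥ τ`). -/
noncomputable def trueQ {K : ℕ} (ν : Bandit K) (τ : ℝ) (k : Fin K) : Bool :=
  decide (τ ≤ ν.mean k)

/-- Simple regret of the classification `Qhat`: the largest gap `|τ - μ_k|` over misclassified
arms `k` (and `0` if there is none). -/
noncomputable def regret {K : ℕ} (ν : Bandit K) (τ : ℝ) (Qhat : Fin K → Bool) : ℝ :=
  ((Finset.univ.filter (fun k => Qhat k ≠ trueQ ν τ k)).sup
    (fun k => Real.toNNReal |τ - ν.mean k|) : NNReal)

/-- Expected simple regret of the strategy `π` on the bandit problem `ν`. -/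
noncomputable def expRegret {K T : ℕ} (ν : Bandit K) (alg : Strategy K T) (τ : ℝ) : ℝ :=
  ∫ h, regret ν τ (alg.decision h) ∂ (traj ν alg.policy T)

/-- Minimax expected simple regret over the class `C` of `K`-armed bandit problems. -/
noncomputable def minimax (K T : ℕ) (τ : ℝ) (C : Bandit K → Prop) : ℝ :=
  ⨅ alg : Strategy K T, ⨆ ν : {ν : Bandit K // C ν}, expRegret ν.1 alg τ


/-- Empirical mean of arm `k` under the Uniform strategy: averages the `⌊T/K⌋` samples of arm `k`
(samples of arm `k` are taken at the times `t` with `⌊t/⌊T/K⌋⌋ = k`). -/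
noncomputable def uniformEmp (K T : ℕ) (k : Fin K) (h : Fin T → ℝ) : ℝ :=
  (∑ t ∈ Finset.univ.filter (fun t : Fin T => (t : ℕ) / (T / K) = (k : ℕ)), h t) / (T / K : ℕ)

/-- The Uniform strategy: sample each arm `⌊T/K⌋` times and classify each arm by comparing its
sample mean to the threshold `τ`. -/
noncomputable def uniformStrategy (K T : ℕ) (hK : 0 < K) (τ : ℝ) : Strategy K T where
  policy := fun t _ => ⟨(t / (T / K)) % K, Nat.mod_lt _ hK⟩
  policy_meas := fun _ => measurable_const
  decision := fun h k => decide (τ ≤ uniformEmp K T k h)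
  decision_meas := by
    apply measurable_pi_lambda
    intro k
    have hm : Measurable (fun h : Fin T → ℝ => uniformEmp K T k h) := by
      unfold uniformEmp; fun_prop
    have hset : MeasurableSet {h : Fin T → ℝ | τ ≤ uniformEmp K T k h} :=
      measurableSet_le measurable_const hm
    have heq : (fun h : Fin T → ℝ => decide (τ ≤ uniformEmp K T k h))
        = fun h => if τ ≤ uniformEmp K T k h then true else false := by
      funext h
      by_cases hc : τ ≤ uniformEmp K T k h <;> simp [hc]
    rw [heq]
    exact Measurable.ite hset measurable_const measurable_const

end TBP

namespace TBP

open ProbabilityTheory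
open scoped ENNReal NNReal

variable {K : ℕ}

lemma measurable_snoc_right {t : ℕ} (h : Fin t → ℝ) :
    Measurable (fun y : ℝ => (Fin.snoc h y : Fin (t+1) → ℝ)) := by
  apply measurable_pi_lambda
  intro i
  refine Fin.lastCases ?_ ?_ i
  · simpa [Fin.snoc_last] using measurable_id'
  · intro j; simpa [Fin.snoc_castSucc] using measurable_const

lemma measurable_snoc_pair {t : ℕ} :
    Measurable (fun p : (Fin t → ℝ) × ℝ => (Fin.snoc p.1 p.2 : Fin (t+1) → ℝ)) := by
  apply measurable_pi_lambda
  intro i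
  refine Fin.lastCases ?_ ?_ i
  · simpa [Fin.snoc_last] using measurable_snd
  · intro j
    simpa [Fin.snoc_castSucc, Function.comp_def] using (measurable_pi_apply j).comp (measurable_fst (α := Fin t → ℝ) (β := ℝ))

lemma measurable_trajKernel (ν : Bandit K) {t : ℕ} {policy : (t : ℕ) → (Fin t → ℝ) → Fin K}
    (hp : Measurable (policy t)) :
    Measurable (fun h : Fin t → ℝ => (ν.dist (policy t h)).map (fun y => (Fin.snoc h y : Fin (t+1) → ℝ))) := by
  have hK : ∀ k : Fin K,
      Measurable (fun h : Fin t → ℝ => (ν.dist k).map (fun y => (Fin.snoc h y : Fin (t+1) → ℝ))) := by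
    intro k
    haveI := ν.prob k
    apply Measure.measurable_of_measurable_coe
    intro s hs
    have heq : (fun h : Fin t → ℝ => (ν.dist k).map (fun y => (Fin.snoc h y : Fin (t+1) → ℝ)) s)
        = fun h : Fin t → ℝ => (ν.dist k) (Prod.mk h ⁻¹'
            ((fun p : (Fin t → ℝ) × ℝ => (Fin.snoc p.1 p.2 : Fin (t+1) → ℝ)) ⁻¹' s)) := by
      funext h
      rw [Measure.map_apply (measurable_snoc_right h) hs]
      rfl
    rw [heq]
    exact measurable_measure_prodMk_left (measurable_snoc_pair hs)
  have : (fun h : Fin t → ℝ => (ν.dist (policy t h)).map (fun y => (Fin.snoc h y : Fin (t+1) → ℝ)))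
      = (fun p : (Fin t → ℝ) × Fin K => (ν.dist p.2).map (fun y => Fin.snoc p.1 y))
          ∘ (fun h => (h, policy t h)) := rfl
  rw [this]
  exact (measurable_from_prod_countable_left hK).comp (measurable_id.prodMk hp)

lemma lintegral_traj_succ (ν : Bandit K) {policy : (t : ℕ) → (Fin t → ℝ) → Fin K}
    (hp : ∀ t, Measurable (policy t)) (t : ℕ)
    {f : (Fin (t+1) → ℝ) → ℝ≥0∞} (hf : Measurable f) :
    ∫⁻ g, f g ∂(traj ν policy (t+1))
      = ∫⁻ h, ∫⁻ y, f (Fin.snoc h y) ∂(ν.dist (policy t h)) ∂(traj ν policy t) := by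
  rw [show traj ν policy (t+1) = (traj ν policy t).bind
      (fun h => (ν.dist (policy t h)).map (fun y => (Fin.snoc h y : Fin (t+1) → ℝ))) from rfl]
  rw [Measure.lintegral_bind (measurable_trajKernel ν (hp t)).aemeasurable hf.aemeasurable]
  refine lintegral_congr fun h => ?_
  rw [lintegral_map hf (measurable_snoc_right h)]

lemma traj_univ (ν : Bandit K) {policy : (t : ℕ) → (Fin t → ℝ) → Fin K}
    (hp : ∀ t, Measurable (policy t)) (t : ℕ) :
    traj ν policy t Set.univ = 1 := by
  induction t with
  | zero => simp [traj]
  | succ t ih =>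
    rw [show traj ν policy (t+1) = (traj ν policy t).bind
        (fun h => (ν.dist (policy t h)).map (fun y => (Fin.snoc h y : Fin (t+1) → ℝ))) from rfl,
      Measure.bind_apply MeasurableSet.univ (measurable_trajKernel ν (hp t)).aemeasurable]
    have h1 : ∀ h : Fin t → ℝ,
        ((ν.dist (policy t h)).map (fun y => (Fin.snoc h y : Fin (t+1) → ℝ))) Set.univ = 1 := by
      intro h
      haveI := ν.prob (policy t h)
      haveI : IsProbabilityMeasure ((ν.dist (policy t h)).map (fun y => (Fin.snoc h y : Fin (t+1) → ℝ))) :=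
        Measure.isProbabilityMeasure_map (measurable_snoc_right h).aemeasurable
      exact measure_univ
    simp only [h1, lintegral_one, ih]

lemma isProbability_traj (ν : Bandit K) {policy : (t : ℕ) → (Fin t → ℝ) → Fin K}
    (hp : ∀ t, Measurable (policy t)) (t : ℕ) :
    IsProbabilityMeasure (traj ν policy t) := ⟨traj_univ ν hp t⟩


noncomputable def Zfun (r : Fin K → ℝ → ℝ≥0∞) (policy : (t : ℕ) → (Fin t → ℝ) → Fin K) :
    (t : ℕ) → (Fin t → ℝ) → ℝ≥0∞
  | 0, _ => 1
  | (t+1), g => Zfun r policy t (Fin.init g) * r (policy t (Fin.init g)) (g (Fin.last t))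

lemma Zfun_snoc (r : Fin K → ℝ → ℝ≥0∞) (policy : (t : ℕ) → (Fin t → ℝ) → Fin K)
    (t : ℕ) (h : Fin t → ℝ) (y : ℝ) :
    Zfun r policy (t+1) (Fin.snoc h y) = Zfun r policy t h * r (policy t h) y := by
  simp [Zfun, Fin.init_snoc, Fin.snoc_last]

lemma measurable_init {t : ℕ} : Measurable (fun g : Fin (t+1) → ℝ => Fin.init g) :=
  measurable_pi_lambda _ fun j => measurable_pi_apply _

lemma measurable_Zfun {r : Fin K → ℝ → ℝ≥0∞} (hr : ∀ k, Measurable (r k))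
    {policy : (t : ℕ) → (Fin t → ℝ) → Fin K} (hp : ∀ t, Measurable (policy t)) (t : ℕ) :
    Measurable (Zfun r policy t) := by
  induction t with
  | zero => exact measurable_const
  | succ t ih =>
    have h2 : Measurable (fun p : ℝ × Fin K => r p.2 p.1) :=
      measurable_from_prod_countable_left fun k => hr k
    exact (ih.comp measurable_init).mul
      (h2.comp ((measurable_pi_apply (Fin.last t)).prodMk ((hp t).comp measurable_init)))

lemma traj_withDensity (ν ν' : Bandit K) {policy : (t : ℕ) → (Fin t → ℝ) → Fin K}
    (hp : ∀ t, Measurable (policy t))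
    {r : Fin K → ℝ → ℝ≥0∞} (hr : ∀ k, Measurable (r k))
    (hd : ∀ k, ν'.dist k = (ν.dist k).withDensity (r k)) (t : ℕ) :
    traj ν' policy t = (traj ν policy t).withDensity (Zfun r policy t) := by
  induction t with
  | zero =>
    have h0 : Zfun r policy 0 = (1 : (Fin 0 → ℝ) → ℝ≥0∞) := rfl
    rw [h0, withDensity_one]
    rfl
  | succ t ih =>
    ext s hs
    rw [show traj ν' policy (t+1) = (traj ν' policy t).bind
        (fun h => (ν'.dist (policy t h)).map (fun y => (Fin.snoc h y : Fin (t+1) → ℝ))) from rfl,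
      Measure.bind_apply hs (measurable_trajKernel ν' (hp t)).aemeasurable, ih]
    have hg : Measurable (fun h : Fin t → ℝ =>
        (Measure.map (fun y => Fin.snoc h y) (ν'.dist (policy t h))) s) :=
      (Measure.measurable_coe hs).comp (measurable_trajKernel ν' (hp t))
    rw [lintegral_withDensity_eq_lintegral_mul _ (measurable_Zfun hr hp t) hg]
    simp only [Pi.mul_apply]
    rw [withDensity_apply _ hs, ← lintegral_indicator hs _,
      lintegral_traj_succ ν hp t ((measurable_Zfun hr hp (t+1)).indicator hs)]
    refine lintegral_congr fun h => ?_
    rw [Measure.map_apply (measurable_snoc_right h) hs, hd,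
      withDensity_apply _ ((measurable_snoc_right h) hs),
      ← lintegral_indicator ((measurable_snoc_right h) hs) _,
      ← lintegral_const_mul _ ((hr _).indicator ((measurable_snoc_right h) hs))]
    refine lintegral_congr fun y => ?_
    by_cases hy : (Fin.snoc h y : Fin (t+1) → ℝ) ∈ s
    · have hy' : y ∈ (fun y => (Fin.snoc h y : Fin (t+1) → ℝ)) ⁻¹' s := hy
      simp [Set.indicator_of_mem, hy, hy', Zfun_snoc]
    · have hy' : y ∉ (fun y => (Fin.snoc h y : Fin (t+1) → ℝ)) ⁻¹' s := hy
      simp [Set.indicator_of_notMem, hy, hy']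

lemma lintegral_Zfun_sq_le (ν : Bandit K) {policy : (t : ℕ) → (Fin t → ℝ) → Fin K}
    (hp : ∀ t, Measurable (policy t)) {r : Fin K → ℝ → ℝ≥0∞} (hr : ∀ k, Measurable (r k))
    {c : ℝ≥0∞} (hc : ∀ k, ∫⁻ y, (r k y)^2 ∂(ν.dist k) ≤ c) (t : ℕ) :
    ∫⁻ h, (Zfun r policy t h)^2 ∂(traj ν policy t) ≤ c ^ t := by
  induction t with
  | zero =>
    simp [traj, Zfun]
  | succ t ih =>
    rw [lintegral_traj_succ ν hp t ((measurable_Zfun hr hp (t+1)).pow_const 2)]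
    have key : ∀ h : Fin t → ℝ,
        ∫⁻ y, (Zfun r policy (t+1) (Fin.snoc h y))^2 ∂(ν.dist (policy t h))
          ≤ (Zfun r policy t h)^2 * c := by
      intro h
      have : ∀ y : ℝ, (Zfun r policy (t+1) (Fin.snoc h y))^2
          = (Zfun r policy t h)^2 * (r (policy t h) y)^2 := by
        intro y; rw [Zfun_snoc, mul_pow]
      simp only [this]
      rw [lintegral_const_mul _ ((hr _).pow_const 2)]
      exact mul_le_mul_right (hc _) _
    calc ∫⁻ h, ∫⁻ y, (Zfun r policy (t+1) (Fin.snoc h y))^2 ∂(ν.dist (policy t h))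
          ∂(traj ν policy t)
        ≤ ∫⁻ h, (Zfun r policy t h)^2 * c ∂(traj ν policy t) := lintegral_mono key
      _ = (∫⁻ h, (Zfun r policy t h)^2 ∂(traj ν policy t)) * c :=
          lintegral_mul_const _ ((measurable_Zfun hr hp t).pow_const 2)
      _ ≤ c ^ t * c := mul_le_mul_left ih _
      _ = c ^ (t+1) := (pow_succ c t).symm


noncomputable def gratio (σ τ μ : ℝ) (y : ℝ) : ℝ≥0∞ :=
  ENNReal.ofReal (Real.exp (((y - τ)^2 - (y - μ)^2) / (2 * σ^2)))

lemma measurable_gratio (σ τ μ : ℝ) : Measurable (gratio σ τ μ) := by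
  apply Measurable.ennreal_ofReal
  fun_prop

lemma vpos_ne (σ : ℝ) (hσ : 0 < σ) : (⟨σ^2, sq_nonneg σ⟩ : ℝ≥0) ≠ 0 := by
  intro h
  have := congrArg (fun x : ℝ≥0 => (x : ℝ)) h
  change σ^2 = 0 at this
  nlinarith

lemma gaussian_withDensity {σ : ℝ} (hσ : 0 < σ) (τ μ : ℝ) :
    (gaussianReal τ ⟨σ^2, sq_nonneg σ⟩).withDensity (gratio σ τ μ)
      = gaussianReal μ ⟨σ^2, sq_nonneg σ⟩ := by
  have hv := vpos_ne σ hσ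
  obtain ⟨v, hvv⟩ : ∃ v : ℝ≥0, v = ⟨σ^2, sq_nonneg σ⟩ := ⟨_, rfl⟩
  rw [← hvv] at hv ⊢
  have hv2 : (v:ℝ) = σ^2 := by subst hvv; rfl
  rw [gaussianReal_of_var_ne_zero _ hv, gaussianReal_of_var_ne_zero _ hv]
  rw [← withDensity_mul _ (measurable_gaussianPDF _ _) (measurable_gratio _ _ _)]
  congr 1
  funext y
  simp only [Pi.mul_apply, gaussianPDF_def, gratio,
    ← ENNReal.ofReal_mul (gaussianPDFReal_nonneg _ _ _)]
  congr 1
  simp only [gaussianPDFReal, hv2]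
  rw [mul_assoc, ← Real.exp_add]
  congr 2
  have hσ2 : σ^2 ≠ 0 := by positivity
  field_simp
  ring

lemma lintegral_gratio_sq {σ : ℝ} (hσ : 0 < σ) (τ μ : ℝ) :
    ∫⁻ y, (gratio σ τ μ y)^2 ∂(gaussianReal τ ⟨σ^2, sq_nonneg σ⟩)
      = ENNReal.ofReal (Real.exp ((μ - τ)^2 / σ^2)) := by
  have hv := vpos_ne σ hσ
  obtain ⟨v, hvv⟩ : ∃ v : ℝ≥0, v = ⟨σ^2, sq_nonneg σ⟩ := ⟨_, rfl⟩
  rw [← hvv] at hv ⊢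
  have hv2 : (v:ℝ) = σ^2 := by subst hvv; rfl
  rw [gaussianReal_of_var_ne_zero _ hv]
  rw [lintegral_withDensity_eq_lintegral_mul _ (measurable_gaussianPDF _ _)
      ((measurable_gratio σ τ μ).pow_const 2)]
  have hpt : (gaussianPDF τ v * fun y => (gratio σ τ μ y)^2)
      = fun y => ENNReal.ofReal (Real.exp ((μ - τ)^2 / σ^2))
          * gaussianPDF (2*μ - τ) v y := by
    funext y
    simp only [Pi.mul_apply, gaussianPDF_def, gratio]
    rw [← ENNReal.ofReal_pow (Real.exp_pos _).le, ← Real.exp_nat_mul,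
      ← ENNReal.ofReal_mul (gaussianPDFReal_nonneg _ _ _),
      ← ENNReal.ofReal_mul (Real.exp_pos _).le]
    congr 1
    simp only [gaussianPDFReal, hv2]
    have hσ2 : σ^2 ≠ 0 := by positivity
    rw [mul_assoc, ← Real.exp_add,
      show (-(y - τ) ^ 2 / (2 * σ ^ 2) + (2:ℕ) * (((y - τ) ^ 2 - (y - μ) ^ 2) / (2 * σ ^ 2)))
          = ((μ - τ) ^ 2 / σ ^ 2 + -(y - (2 * μ - τ)) ^ 2 / (2 * σ ^ 2)) from by
        push_cast; field_simp; ring,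
      Real.exp_add]
    ring
  rw [hpt, lintegral_const_mul _ (measurable_gaussianPDF _ _), lintegral_gaussianPDF_eq_one _ hv,
    mul_one]


lemma integrable_id_gaussianReal0 {v : ℝ≥0} (hv : v ≠ 0) :
    Integrable (fun x : ℝ => x) (gaussianReal 0 v) := by
  rw [gaussianReal_of_var_ne_zero _ hv,
    integrable_withDensity_iff (measurable_gaussianPDF _ _)
      (ae_of_all _ fun x => ENNReal.ofReal_lt_top)]
  have hvpos : (0:ℝ) < (v:ℝ) := NNReal.coe_pos.mpr (pos_iff_ne_zero.mpr hv)
  have hb : (0:ℝ) < (2*(v:ℝ))⁻¹ := by positivity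
  have h := (integrable_mul_exp_neg_mul_sq hb).const_mul ((Real.sqrt (2 * π * v))⁻¹)
  refine h.congr (ae_of_all _ fun x => ?_)
  simp only [gaussianPDF_def]
  rw [ENNReal.toReal_ofReal (gaussianPDFReal_nonneg _ _ _)]
  simp only [gaussianPDFReal, NNReal.coe_mk]
  rw [show -(x-0)^2/(2*(v:ℝ)) = -(2*(v:ℝ))⁻¹ * x^2 from by field_simp; ring]
  ring

lemma gaussianReal_map_neg {v : ℝ≥0} :
    (gaussianReal 0 v).map (fun x : ℝ => -x) = gaussianReal 0 v := by
  have h := gaussianReal_map_const_mul (μ := 0) (v := v) (-1)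
  rw [show (fun x : ℝ => (-1:ℝ) * x) = fun x : ℝ => -x from by funext x; ring] at h
  rw [h]
  congr 1
  · ring
  · ext
    simp

lemma integral_id_gaussianReal0 {v : ℝ≥0} : ∫ x, x ∂(gaussianReal 0 v) = 0 := by
  have h1 : ∫ x, x ∂(gaussianReal 0 v) = ∫ x, -x ∂(gaussianReal 0 v) := by
    conv_lhs => rw [← gaussianReal_map_neg (v := v)]
    rw [integral_map (f := fun x : ℝ => x) (by fun_prop : Measurable fun x : ℝ => -x).aemeasurable
      (measurable_id.aestronglyMeasurable : AEStronglyMeasurable (fun x : ℝ => x) _)]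
  rw [integral_neg] at h1
  linarith

lemma integral_id_gaussianReal (m : ℝ) {v : ℝ≥0} (hv : v ≠ 0) :
    ∫ x, x ∂(gaussianReal m v) = m := by
  have hmap : gaussianReal m v = (gaussianReal 0 v).map (· + m) := by
    rw [gaussianReal_map_add_const, zero_add]
  rw [hmap, integral_map (f := fun x : ℝ => x) (by fun_prop : Measurable fun x : ℝ => x + m).aemeasurable
    (measurable_id.aestronglyMeasurable : AEStronglyMeasurable (fun x : ℝ => x) _)]
  rw [integral_add (integrable_id_gaussianReal0 hv) (integrable_const m)]
  rw [integral_id_gaussianReal0, integral_const]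
  simp


lemma numeric_core {K : ℕ} (hK : 3 ≤ K) :
    Real.exp (max 2 (Real.log K) / 8) * (1 / (K:ℝ)) ≤ 49/64 := by
  have hK3 : (3:ℝ) ≤ (K:ℝ) := by exact_mod_cast hK
  have hKpos : (0:ℝ) < K := by linarith
  rcases le_or_gt (Real.log K) 2 with hcase | hcase
  · have hL : max 2 (Real.log K) = 2 := max_eq_left hcase
    rw [hL]
    have h1 : Real.exp (2/8 : ℝ) ≤ 4/3 := by
      have h2 : (1:ℝ) - 1/4 ≤ Real.exp (-(1/4)) := by
        have := Real.add_one_le_exp (-(1/4 : ℝ))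
        linarith
      have h3 : Real.exp (1/4 : ℝ) * Real.exp (-(1/4 : ℝ)) = 1 := by
        rw [← Real.exp_add]; norm_num
      nlinarith [Real.exp_pos (1/4 : ℝ), Real.exp_pos (-(1/4) : ℝ)]
    have h4 : 1/(K:ℝ) ≤ 1/3 := by
      rw [div_le_div_iff₀ hKpos (by norm_num)]; linarith
    have h5 : (0:ℝ) < Real.exp (2/8) := Real.exp_pos _
    calc Real.exp (2/8 : ℝ) * (1/(K:ℝ)) ≤ (4/3) * (1/3) := by
          apply mul_le_mul h1 h4 (by positivity) (by norm_num)
      _ ≤ 49/64 := by norm_num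
  · have hL : max 2 (Real.log K) = Real.log K := max_eq_right hcase.le
    rw [hL]
    have hKexp : Real.exp (Real.log K) = K := Real.exp_log hKpos
    have h1 : Real.exp (Real.log K / 8) * (1/(K:ℝ))
        = Real.exp (Real.log K / 8 - Real.log K) := by
      rw [Real.exp_sub, hKexp]; ring
    rw [h1]
    have h2 : Real.log K / 8 - Real.log K = -(7/8 * Real.log K) := by ring
    rw [h2]
    have h3 : (7/4 : ℝ) ≤ 7/8 * Real.log K := by linarith
    have h4 : Real.exp (-(7/8 * Real.log K)) ≤ Real.exp (-(7/4)) := by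
      apply Real.exp_le_exp.mpr; linarith
    have h5 : Real.exp (-(7/4 : ℝ)) ≤ 4/11 := by
      have h6 := Real.add_one_le_exp (7/4 : ℝ)
      have h7 : Real.exp (7/4 : ℝ) * Real.exp (-(7/4):ℝ) = 1 := by
        rw [← Real.exp_add]; norm_num
      nlinarith [Real.exp_pos (-(7/4) : ℝ)]
    linarith


end TBP

open ProbabilityTheory in
open scoped ENNReal NNReal in
open TBP in
theorem monotone_lower_bound (K T : ℕ) (σ τ : ℝ) (hK : 3 ≤ K) (hT : 1 ≤ T) (hσ : 0 < σ)
    (alg : Strategy K T) :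
    ∃ ν : Bandit K, ν.isGaussian σ ∧ ν.mono ∧
      1 / 8 * Real.sqrt (σ ^ 2 * max 2 (Real.log K) / (8 * T)) ≤ expRegret ν alg τ := by
  classical
  have hKpos : 0 < K := by omega
  have hTR : (0:ℝ) < T := by exact_mod_cast hT
  set L : ℝ := max 2 (Real.log K) with hLdef
  have hL2 : (2:ℝ) ≤ L := le_max_left _ _
  have hLpos : (0:ℝ) < L := by linarith
  set A : ℝ := Real.sqrt (σ ^ 2 * L / (8 * T)) with hAdef
  have hArg : (0:ℝ) ≤ σ ^ 2 * L / (8 * T) := by positivity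
  have hApos : 0 < A := Real.sqrt_pos.mpr (by positivity)
  have hA2 : A ^ 2 = σ ^ 2 * L / (8 * T) := Real.sq_sqrt hArg
  have hv := vpos_ne σ hσ
  -- the bandit instances
  set mfun : Fin K → Fin K → ℝ := fun i k => if (i:ℕ) ≤ (k:ℕ) then τ + A else τ - A with hmfun
  set νb : Fin K → Bandit K := fun i =>
    ⟨fun k => gaussianReal (mfun i k) ⟨σ^2, sq_nonneg σ⟩, fun k => instIsProbabilityMeasureGaussianReal _ _⟩ with hνb
  set ν0 : Bandit K := ⟨fun k => gaussianReal τ ⟨σ^2, sq_nonneg σ⟩, fun k => instIsProbabilityMeasureGaussianReal _ _⟩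
    with hν0
  have hmean : ∀ i k, (νb i).mean k = mfun i k := fun i k => integral_id_gaussianReal _ hv
  set pat : Fin K → (Fin K → Bool) := fun i k => decide ((i:ℕ) ≤ (k:ℕ)) with hpat
  set As : Fin K → Set (Fin T → ℝ) := fun i => alg.decision ⁻¹' {pat i} with hAs
  have hAmeas : ∀ i, MeasurableSet (As i) := fun i =>
    alg.decision_meas (measurableSet_singleton _)
  set P0 : Measure (Fin T → ℝ) := traj ν0 alg.policy T with hP0
  haveI : IsProbabilityMeasure P0 := isProbability_traj ν0 alg.policy_meas T
  -- existence of a pattern with small P0 probability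
  have hpat_inj : Function.Injective pat := by
    intro i j hij
    have h1 := congrFun hij i
    have h2 := congrFun hij j
    simp only [hpat, decide_eq_decide] at h1 h2
    have hii : (i:ℕ) ≤ i := le_refl _
    have hjj : (j:ℕ) ≤ j := le_refl _
    exact Fin.ext (le_antisymm (h2.mpr hjj) (h1.mp hii))
  have hdisj : Pairwise (Function.onFun Disjoint As) := by
    intro i j hij
    refine Set.disjoint_left.mpr fun h hi hj => ?_
    exact hij (hpat_inj (hi.symm.trans hj))
  have hqsum : ∑ i : Fin K, P0 (As i) ≤ 1 := by
    have h1 : P0 (⋃ i, As i) = ∑' i, P0 (As i) := measure_iUnion hdisj hAmeas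
    rw [tsum_fintype] at h1
    rw [← h1]
    exact prob_le_one
  have hex : ∃ i, P0 (As i) ≤ ENNReal.ofReal (1 / K) := by
    by_contra hcon
    push_neg at hcon
    have hlt : ∀ i : Fin K, 1/(K:ℝ) < (P0 (As i)).toReal := by
      intro i
      have := hcon i
      rw [ENNReal.ofReal_lt_iff_lt_toReal (by positivity) (measure_ne_top _ _)] at this
      exact this
    have hsumR : ∑ i : Fin K, (P0 (As i)).toReal ≤ 1 := by
      have h2 : (∑ i : Fin K, P0 (As i)).toReal ≤ (1:ℝ≥0∞).toReal :=
        ENNReal.toReal_mono (by simp) hqsum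
      rw [ENNReal.toReal_sum (fun i _ => measure_ne_top _ _)] at h2
      simpa using h2
    have hKne : (K:ℝ) ≠ 0 := by positivity
    have hcontr : (1:ℝ) < 1 := by
      calc (1:ℝ) = ∑ _i : Fin K, 1/(K:ℝ) := by
            rw [Finset.sum_const, Finset.card_univ, Fintype.card_fin, nsmul_eq_mul]
            field_simp
        _ < ∑ i : Fin K, (P0 (As i)).toReal :=
            Finset.sum_lt_sum_of_nonempty (by simp [Finset.univ_nonempty_iff]; exact
              ⟨⟨0, hKpos⟩⟩) (fun i _ => hlt i)
        _ ≤ 1 := hsumR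
    exact absurd hcontr (lt_irrefl 1)
  obtain ⟨i, hqi⟩ := hex
  -- change of measure for instance i
  set r : Fin K → ℝ → ℝ≥0∞ := fun k => gratio σ τ (mfun i k) with hrdef
  have hr : ∀ k, Measurable (r k) := fun k => measurable_gratio _ _ _
  have hd : ∀ k, (νb i).dist k = (ν0.dist k).withDensity (r k) := fun k =>
    (gaussian_withDensity hσ τ _).symm
  set Pi' : Measure (Fin T → ℝ) := traj (νb i) alg.policy T with hPidef
  haveI : IsProbabilityMeasure Pi' := isProbability_traj (νb i) alg.policy_meas T
  have hPi : Pi' = P0.withDensity (Zfun r alg.policy T) :=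
    traj_withDensity ν0 (νb i) alg.policy_meas hr hd T
  -- second moment bound
  set c : ℝ≥0∞ := ENNReal.ofReal (Real.exp (A^2/σ^2)) with hcdef
  have hc : ∀ k, ∫⁻ y, (r k y)^2 ∂(ν0.dist k) ≤ c := by
    intro k
    rw [hrdef]
    have : (ν0.dist k) = gaussianReal τ ⟨σ^2, sq_nonneg σ⟩ := rfl
    rw [this, lintegral_gratio_sq hσ τ (mfun i k)]
    have habs : (mfun i k - τ)^2 = A^2 := by
      rw [hmfun]
      by_cases h : (i:ℕ) ≤ (k:ℕ) <;> simp [h] <;> ring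
    rw [habs]
  have hZ2 : ∫⁻ h, (Zfun r alg.policy T h)^2 ∂P0 ≤ c ^ T :=
    lintegral_Zfun_sq_le ν0 alg.policy_meas hr hc T
  have hcT : c ^ T ≤ ENNReal.ofReal (Real.exp (L/8)) := by
    rw [hcdef, ← ENNReal.ofReal_pow (Real.exp_pos _).le, ← Real.exp_nat_mul]
    apply ENNReal.ofReal_le_ofReal
    apply Real.exp_le_exp.mpr
    apply le_of_eq
    rw [hA2]
    have hσ2 : σ^2 ≠ 0 := by positivity
    have hT0 : (T:ℝ) ≠ 0 := by positivity
    field_simp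
  -- Cauchy-Schwarz
  have hCS : Pi' (As i) ^ 2 ≤ (c ^ T) * P0 (As i) := by
    have hZm : Measurable (Zfun r alg.policy T) := measurable_Zfun hr alg.policy_meas T
    have hPiA : Pi' (As i) = ∫⁻ h, Zfun r alg.policy T h * (As i).indicator 1 h ∂P0 := by
      rw [hPi, withDensity_apply _ (hAmeas i), ← lintegral_indicator (hAmeas i) _]
      refine lintegral_congr fun h => ?_
      by_cases hh : h ∈ As i <;> simp [hh]
    have hpq : Real.HolderConjugate 2 2 := Real.HolderConjugate.two_two
    have hCS2 := ENNReal.lintegral_mul_le_Lp_mul_Lq P0 hpq hZm.aemeasurable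
      ((measurable_one.indicator (hAmeas i)).aemeasurable)
    have e1 : ∫⁻ h, Zfun r alg.policy T h ^ (2:ℝ) ∂P0
        = ∫⁻ h, Zfun r alg.policy T h ^ 2 ∂P0 := by
      refine lintegral_congr fun h => ?_
      rw [← ENNReal.rpow_natCast (Zfun r alg.policy T h) 2]
      norm_num
    have e2 : ∫⁻ h, ((As i).indicator 1 h) ^ (2:ℝ) ∂P0 = P0 (As i) := by
      rw [← lintegral_indicator_one (hAmeas i)]
      refine lintegral_congr fun h => ?_
      by_cases hh : h ∈ As i <;> simp [hh]
    simp only [Pi.mul_apply] at hCS2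
    rw [e1, e2] at hCS2
    have hsq : ∀ x : ℝ≥0∞, (x ^ ((1:ℝ)/2))^2 = x := by
      intro x
      rw [← ENNReal.rpow_natCast (x ^ ((1:ℝ)/2)) 2, ← ENNReal.rpow_mul]
      norm_num
    calc Pi' (As i) ^ 2
        ≤ ((∫⁻ h, Zfun r alg.policy T h ^ 2 ∂P0) ^ ((1:ℝ)/2)
            * P0 (As i) ^ ((1:ℝ)/2)) ^ 2 := by
          rw [hPiA]
          exact pow_le_pow_left' hCS2 2
      _ = (∫⁻ h, Zfun r alg.policy T h ^ 2 ∂P0) * P0 (As i) := by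
          rw [mul_pow, hsq, hsq]
      _ ≤ (c ^ T) * P0 (As i) := mul_le_mul_left hZ2 _
  -- numeric bound
  have hnum : Pi' (As i) ≤ ENNReal.ofReal (7/8) := by
    by_contra hcon
    push_neg at hcon
    have h1 : (ENNReal.ofReal (7/8)) ^ 2 < Pi' (As i) ^ 2 :=
      ENNReal.pow_lt_pow_left (by norm_num) hcon
    have h2 : Pi' (As i) ^ 2 ≤ ENNReal.ofReal (Real.exp (L/8)) * ENNReal.ofReal (1/K) := by
      calc Pi' (As i) ^ 2 ≤ (c ^ T) * P0 (As i) := hCS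
        _ ≤ ENNReal.ofReal (Real.exp (L/8)) * ENNReal.ofReal (1/K) :=
            mul_le_mul' hcT hqi
    rw [← ENNReal.ofReal_mul (Real.exp_pos _).le] at h2
    have h3 : (ENNReal.ofReal (7/8:ℝ)) ^ 2 = ENNReal.ofReal (49/64) := by
      rw [← ENNReal.ofReal_pow (by norm_num)]
      norm_num
    rw [h3] at h1
    have h4 : ENNReal.ofReal (Real.exp (L/8) * (1/K)) ≤ ENNReal.ofReal (49/64) :=
      ENNReal.ofReal_le_ofReal (numeric_core hK)
    exact absurd ((h1.trans_le h2).trans_le h4) (lt_irrefl _)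
  -- regret of instance i
  have htrue : trueQ (νb i) τ = pat i := by
    funext k
    rw [trueQ, hmean i k, hmfun, hpat]
    by_cases h : (i:ℕ) ≤ (k:ℕ)
    · have hτ : τ ≤ τ + A := by linarith
      simp [h, hτ]
    · have hτ : ¬ (τ ≤ τ - A) := by push_neg; linarith
      simp [h, hτ]
  have habs2 : ∀ k, |τ - (νb i).mean k| = A := by
    intro k
    rw [hmean i k, hmfun]
    by_cases h : (i:ℕ) ≤ (k:ℕ) <;> simp only [h, if_true, if_false]
    · rw [show τ - (τ + A) = -A by ring, abs_neg, abs_of_pos hApos]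
    · rw [show τ - (τ - A) = A by ring, abs_of_pos hApos]
  have hreg : (fun h => regret (νb i) τ (alg.decision h))
      = (As i)ᶜ.indicator (fun _ => A) := by
    funext h
    by_cases hmem : h ∈ As i
    · have hdec : alg.decision h = pat i := hmem
      rw [Set.indicator_of_notMem (by simp [hmem])]
      rw [regret, htrue, hdec]
      have : (Finset.univ.filter (fun k => pat i k ≠ pat i k)) = ∅ := by
        apply Finset.filter_false_of_mem; intro k _; simp
      rw [this]
      simp
    · have hdec : alg.decision h ≠ pat i := hmem
      rw [Set.indicator_of_mem (by simp [hmem])]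
      rw [regret, htrue]
      obtain ⟨k0, hk0⟩ := Function.ne_iff.mp hdec
      have hne : (Finset.univ.filter (fun k => alg.decision h k ≠ pat i k)).Nonempty :=
        ⟨k0, by simp [hk0]⟩
      have hconst : ∀ k ∈ Finset.univ.filter (fun k => alg.decision h k ≠ pat i k),
          Real.toNNReal |τ - (νb i).mean k| = Real.toNNReal A := by
        intro k _; rw [habs2 k]
      rw [Finset.sup_congr rfl hconst, Finset.sup_const hne]
      exact Real.coe_toNNReal A hApos.le
  refine ⟨νb i, ⟨mfun i, fun k => rfl⟩, ?_, ?_⟩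
  · -- monotone
    intro k k' hkk'
    rw [hmean i k, hmean i k', hmfun]
    by_cases h : (i:ℕ) ≤ (k:ℕ)
    · have h' : (i:ℕ) ≤ (k':ℕ) := le_trans h hkk'
      simp [h, h']
    · by_cases h' : (i:ℕ) ≤ (k':ℕ) <;> simp [h, h'] <;> linarith
  · -- regret bound
    have hcompl : ENNReal.ofReal (1/8) ≤ Pi' (As i)ᶜ := by
      rw [prob_compl_eq_one_sub (hAmeas i)]
      calc ENNReal.ofReal (1/8 : ℝ) = 1 - ENNReal.ofReal (7/8) := by
            rw [← ENNReal.ofReal_one, ← ENNReal.ofReal_sub _ (by norm_num)]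
            norm_num
        _ ≤ 1 - Pi' (As i) := tsub_le_tsub_left hnum 1
    have htoReal : (1/8 : ℝ) ≤ (Pi' (As i)ᶜ).toReal := by
      rw [← ENNReal.ofReal_le_iff_le_toReal (measure_ne_top _ _)]
      exact hcompl
    have hregint : expRegret (νb i) alg τ = (Pi' (As i)ᶜ).toReal * A := by
      rw [expRegret, hreg]
      rw [integral_indicator_const A (hAmeas i).compl]
      simp [smul_eq_mul, Measure.real, hPidef]
    rw [hregint]
    calc 1 / 8 * Real.sqrt (σ ^ 2 * max 2 (Real.log ↑K) / (8 * ↑T))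
        = 1/8 * A := rfl
      _ ≤ (Pi' (As i)ᶜ).toReal * A := by
          apply mul_le_mul_of_nonneg_right htoReal hApos.le
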